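/- Let c ≥ 1, α > 0, and let β_k^n denote the coefficients of the expansion ψ_{n,c}^{(α)} = ∑_k β_k^n P̃_k^{(α,α)} in normalized Jacobi polynomials. Suppose for all n, k with k ≤ n/1.9 and q = c²/χ_n^α(c) < 1 the bound |β_k^n| ≤ C_α (2√(χ_n^α(c))/c)^k |μ_n^α(c)| holds, together with χ_n^α(c) ≤ n(n+2α+1)+c² and the eigenvalue bound |μ_n^α(c)| ≤ (k_α/(c^{α/2+1} log((2n-1)/(ec)))) (ec/(2n-1))^{n+α/2}. Then there exist constants δ > 0 and C_{c,α} > 0 such that for all integers n ≥ m_α c with m_α = 4.13·(1.28 + (2α+1)/1.9)^{0.55} and all k ≤ n/1.9, |β_k^n| ≤ C_{c,α} e^{-δn}. -/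
import Mathlib

set_option maxHeartbeats 1000000


open Real

/-- Super-exponential smallness of the low-order Jacobi coefficients `β_k^n` of the GPSWFs:
assuming the coefficient bound `|β_k^n| ≤ C_α (2√(χ_n)/c)^k |μ_n|` for `k ≤ n/1.9` and
`q = c²/χ_n < 1`, the eigenvalue bounds `n(n+2α+1) ≤ χ_n ≤ n(n+2α+1)+c²`, and the decay
`|μ_n| ≤ (k_α/(c^{α/2+1} log((2n-1)/(ec)))) (ec/(2n-1))^{n+α/2}` for `n > (ec+1)/2`,
there exist `δ > 0` and `C_{c,α} > 0` such that `|β_k^n| ≤ C_{c,α} e^{-δn}` for all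
`n ≥ m_α c` with `m_α = 4.13 (1.28+(2α+1)/1.9)^{0.55}` and all `k ≤ n/1.9`. -/
theorem jacobi_coefficient_decay (c α : ℝ) (hc : 1 ≤ c) (hα : 0 < α)
    (β : ℕ → ℕ → ℝ) (χ : ℕ → ℝ) (μ : ℕ → ℂ)
    (hβ : ∀ n k : ℕ, (k : ℝ) ≤ (n : ℝ) / 1.9 → c ^ 2 / χ n < 1 →
      |β k n| ≤ 2 ^ α * (3/2 : ℝ) ^ ((3 : ℝ)/4) * (3/2 + 2 * α) ^ ((3 : ℝ)/4 + α) /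
          Real.exp 1 ^ (2 * α + 3/2) *
        (2 * Real.sqrt (χ n) / c) ^ k * ‖μ n‖)
    (hχlow : ∀ n : ℕ, (n : ℝ) * ((n : ℝ) + 2 * α + 1) ≤ χ n)
    (hχup : ∀ n : ℕ, χ n ≤ (n : ℝ) * ((n : ℝ) + 2 * α + 1) + c ^ 2)
    (hμ : ∀ n : ℕ, (Real.exp 1 * c + 1) / 2 < (n : ℝ) →
      ‖μ n‖ ≤ (2 / Real.exp 1) ^ (1 + α / 2) * π * Real.sqrt (Real.Gamma (α + 1)) /
          (c ^ (α / 2 + 1) * Real.log ((2 * (n : ℝ) - 1) / (Real.exp 1 * c))) *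
          (Real.exp 1 * c / (2 * (n : ℝ) - 1)) ^ ((n : ℝ) + α / 2)) :
    ∃ δ > (0 : ℝ), ∃ C > (0 : ℝ), ∀ n k : ℕ,
      4.13 * (1.28 + (2 * α + 1) / 1.9) ^ ((0.55 : ℝ)) * c ≤ (n : ℝ) →
      (k : ℝ) ≤ (n : ℝ) / 1.9 →
      |β k n| ≤ C * Real.exp (-δ * (n : ℝ)) := by
  have hcpos : (0:ℝ) < c := by linarith
  have he1pos : (0:ℝ) < Real.exp 1 := Real.exp_pos 1
  have he1lt : Real.exp 1 < 272/100 := lt_trans Real.exp_one_lt_d9 (by norm_num)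
  -- the threshold constant m (kept opaque)
  obtain ⟨m, hm⟩ : ∃ m : ℝ, m = 4.13 * (1.28 + (2 * α + 1) / 1.9) ^ ((0.55 : ℝ)) := ⟨_, rfl⟩
  have hbase : (1:ℝ) ≤ 1.28 + (2 * α + 1) / 1.9 := by
    have h0 : 0 < (2*α+1)/1.9 := div_pos (by linarith) (by norm_num)
    norm_num at h0 ⊢ <;> linarith
  have hmge : (413/100:ℝ) ≤ m := by
    have h1 : (1:ℝ) ≤ (1.28 + (2 * α + 1) / 1.9) ^ ((0.55 : ℝ)) :=
      Real.one_le_rpow hbase (by norm_num)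
    rw [hm, show (4.13:ℝ) = 413/100 from by norm_num]
    nlinarith
  have hmpos : (0:ℝ) < m := by linarith
  -- the constant Cα from the coefficient bound
  set Cα : ℝ := 2 ^ α * (3/2 : ℝ) ^ ((3 : ℝ)/4) * (3/2 + 2 * α) ^ ((3 : ℝ)/4 + α) /
      Real.exp 1 ^ (2 * α + 3/2) with hCα
  have hCαpos : 0 < Cα := by
    rw [hCα]
    have h1 : (0:ℝ) < (2:ℝ) ^ α := Real.rpow_pos_of_pos (by norm_num) _
    have h2 : (0:ℝ) < (3/2 : ℝ) ^ ((3 : ℝ)/4) := Real.rpow_pos_of_pos (by norm_num) _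
    have h3 : (0:ℝ) < (3/2 + 2 * α : ℝ) ^ ((3 : ℝ)/4 + α) :=
      Real.rpow_pos_of_pos (by linarith) _
    have h4 : (0:ℝ) < Real.exp 1 ^ (2 * α + 3/2) := Real.rpow_pos_of_pos he1pos _
    exact div_pos (mul_pos (mul_pos h1 h2) h3) h4
  clear_value Cα
  -- the constant K from the eigenvalue bound
  set K : ℝ := (2 / Real.exp 1) ^ (1 + α / 2) * π * Real.sqrt (Real.Gamma (α + 1)) with hK
  have hKpos : 0 < K := by
    rw [hK]
    have hΓ : 0 < Real.Gamma (α + 1) := Real.Gamma_pos_of_pos (by linarith)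
    have h1 : (0:ℝ) < (2 / Real.exp 1) ^ (1 + α / 2) :=
      Real.rpow_pos_of_pos (div_pos (by norm_num) he1pos) _
    exact mul_pos (mul_pos h1 Real.pi_pos) (Real.sqrt_pos.mpr hΓ)
  clear_value K
  obtain ⟨L0, hL0⟩ : ∃ L0 : ℝ, L0 = Real.log (726/100 / Real.exp 1) := ⟨_, rfl⟩
  have hL0pos : 0 < L0 := by
    rw [hL0]
    apply Real.log_pos
    rw [lt_div_iff₀ he1pos]; linarith
  -- the constant D and the exponent constant G
  obtain ⟨D, hD⟩ : ∃ D : ℝ, D = 1 + (2 * α + 1) / m + 1 / m := ⟨_, rfl⟩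
  have hD1 : 1 ≤ D := by
    have t1 : 0 ≤ (2*α+1)/m := div_nonneg (by linarith) hmpos.le
    have t2 : 0 ≤ 1/m := div_nonneg zero_le_one hmpos.le
    rw [hD]; linarith
  have hDpos : 0 < D := by linarith
  obtain ⟨G, hG⟩ : ∃ G : ℝ, G = Real.log (2 * D) / 1.9 + 1 := ⟨_, rfl⟩
  obtain ⟨N0, hN0⟩ : ∃ N0 : ℝ, N0 = c * Real.exp ((19/9) * (G + 1)) := ⟨_, rfl⟩
  have hN0pos : 0 < N0 := by rw [hN0]; exact mul_pos hcpos (Real.exp_pos _)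
  refine ⟨1, one_pos, Cα * (K / L0) * Real.exp (N0 * (|G| + 1)),
    mul_pos (mul_pos hCαpos (div_pos hKpos hL0pos)) (Real.exp_pos _), ?_⟩
  intro n k hn hk
  rw [← hm] at hn
  have hn413 : (413/100) * c ≤ (n:ℝ) :=
    le_trans (mul_le_mul_of_nonneg_right hmge hcpos.le) hn
  have hnpos : (0:ℝ) < (n:ℝ) := by linarith
  have hnm' : m ≤ (n:ℝ) := by
    have := mul_le_mul_of_nonneg_left hc hmpos.le
    linarith [hn]
  have hcn : c ≤ (n:ℝ) := by linarith only [hn413, hcpos]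
  have hA0 : (0:ℝ) < 2 * α + 1 := by linarith only [hα]
  have hnA : (0:ℝ) ≤ (n:ℝ) * (2 * α + 1) := mul_nonneg hnpos.le hA0.le
  have hnn : (0:ℝ) < (n:ℝ) * (n:ℝ) := mul_pos hnpos hnpos
  -- q < 1
  have hχn : (n:ℝ) * ((n:ℝ) + 2 * α + 1) ≤ χ n := hχlow n
  have hχpos : 0 < χ n := by nlinarith only [hχn, hnA, hnn]
  have hq : c ^ 2 / χ n < 1 := by
    rw [div_lt_one hχpos]
    nlinarith only [mul_le_mul hn413 hn413 (by positivity) hnpos.le,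
      mul_pos hcpos hcpos, hnA, hχn]
  have hβ' := hβ n k hk hq
  -- bounds on sqrt (χ n)
  have hsq_low : (n:ℝ) ≤ Real.sqrt (χ n) := by
    rw [Real.le_sqrt hnpos.le hχpos.le]
    nlinarith only [hχn, hnA]
  have h1 : 2 * α + 1 ≤ (n:ℝ) * (2 * α + 1) / m := by
    rw [le_div_iff₀ hmpos]
    nlinarith only [mul_le_mul_of_nonneg_left hnm' hA0.le]
  have h2 : c ≤ (n:ℝ) / m := by
    rw [le_div_iff₀ hmpos]; linarith only [hn]
  have hnD : (n:ℝ) + (2 * α + 1) + c ≤ (n:ℝ) * D := by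
    have hexp : (n:ℝ) * D = (n:ℝ) + (n:ℝ) * (2 * α + 1) / m + (n:ℝ) / m := by
      rw [hD]; ring
    linarith only [hexp, h1, h2]
  have hnDpos : (0:ℝ) < (n:ℝ) * D := mul_pos hnpos hDpos
  have hχup' : χ n ≤ ((n:ℝ) * D) ^ 2 := by
    have h3 := hχup n
    have h4 : (0:ℝ) ≤ (n:ℝ) + (2 * α + 1) + c := by
      linarith only [hnpos, hA0, hcpos]
    nlinarith only [h3, mul_le_mul hnD hnD h4 hnDpos.le, hnA,
      mul_nonneg hnpos.le hcpos.le,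
      mul_nonneg hA0.le hcpos.le,
      sq_nonneg (2*α+1)]
  have hsq_up : Real.sqrt (χ n) ≤ (n:ℝ) * D := by
    calc Real.sqrt (χ n) ≤ Real.sqrt (((n:ℝ) * D) ^ 2) := Real.sqrt_le_sqrt hχup'
    _ = (n:ℝ) * D := Real.sqrt_sq hnDpos.le
  -- the base X of the power, and its upper bound T
  have hsqnn : (0:ℝ) ≤ Real.sqrt (χ n) := Real.sqrt_nonneg _
  have hX1 : 1 ≤ 2 * Real.sqrt (χ n) / c := by
    rw [le_div_iff₀ hcpos]; linarith only [hsq_low, hsqnn, hcn]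
  obtain ⟨T, hT⟩ : ∃ T : ℝ, T = 2 * D * ((n:ℝ) / c) := ⟨_, rfl⟩
  have hTpos : 0 < T := by
    rw [hT]; exact mul_pos (mul_pos two_pos hDpos) (div_pos hnpos hcpos)
  have hXT : 2 * Real.sqrt (χ n) / c ≤ T := by
    have step : 2 * Real.sqrt (χ n) / c ≤ 2 * ((n:ℝ) * D) / c :=
      (div_le_div_iff_of_pos_right hcpos).mpr (by linarith)
    have heq : 2 * ((n:ℝ) * D) / c = T := by rw [hT]; ring
    linarith only [step, heq]
  -- power bound
  have hpow : (2 * Real.sqrt (χ n) / c) ^ k ≤ Real.exp (Real.log T * ((n:ℝ) / 1.9)) := by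
    have hkn : (0:ℝ) ≤ (n:ℝ) / 1.9 := div_nonneg hnpos.le (by norm_num)
    calc (2 * Real.sqrt (χ n) / c) ^ k
        = (2 * Real.sqrt (χ n) / c) ^ ((k:ℝ)) := (Real.rpow_natCast _ k).symm
    _ ≤ (2 * Real.sqrt (χ n) / c) ^ ((n:ℝ) / 1.9) :=
        Real.rpow_le_rpow_of_exponent_le hX1 hk
    _ ≤ T ^ ((n:ℝ) / 1.9) :=
        Real.rpow_le_rpow (le_trans zero_le_one hX1) hXT hkn
    _ = Real.exp (Real.log T * ((n:ℝ) / 1.9)) := Real.rpow_def_of_pos hTpos _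
  -- eigenvalue bound
  have hec : Real.exp 1 * c ≤ (272/100) * c := mul_le_mul_of_nonneg_right he1lt.le hcpos.le
  have hnbig : (Real.exp 1 * c + 1) / 2 < (n:ℝ) := by
    rw [div_lt_iff₀ (by norm_num : (0:ℝ) < 2)]; linarith only [hec, hn413, hc]
  have hμ' := hμ n hnbig
  have h2n1 : Real.exp 1 * c < 2 * (n:ℝ) - 1 := by linarith only [hec, hn413, hc]
  have h2n1pos : (0:ℝ) < 2 * (n:ℝ) - 1 := by linarith only [hn413, hc, hcpos]
  have hecpos : (0:ℝ) < Real.exp 1 * c := mul_pos he1pos hcpos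
  have hrpos : 0 < Real.exp 1 * c / (2 * (n:ℝ) - 1) := div_pos hecpos h2n1pos
  have hr1 : Real.exp 1 * c / (2 * (n:ℝ) - 1) < 1 := (div_lt_one h2n1pos).mpr h2n1
  have hLge : L0 ≤ Real.log ((2 * (n:ℝ) - 1) / (Real.exp 1 * c)) := by
    rw [hL0]
    apply Real.log_le_log (div_pos (by norm_num) he1pos)
    rw [div_le_div_iff₀ he1pos hecpos]
    linarith only [mul_le_mul_of_nonneg_right
      (show (726/100:ℝ) * c ≤ 2 * (n:ℝ) - 1 by linarith only [hn413, hc]) he1pos.le]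
  have hLpos : 0 < Real.log ((2 * (n:ℝ) - 1) / (Real.exp 1 * c)) := lt_of_lt_of_le hL0pos hLge
  have hcr : (1:ℝ) ≤ c ^ (α / 2 + 1) := Real.one_le_rpow hc (by linarith)
  have hden : L0 ≤ c ^ (α / 2 + 1) * Real.log ((2 * (n:ℝ) - 1) / (Real.exp 1 * c)) := by
    calc L0 ≤ Real.log ((2 * (n:ℝ) - 1) / (Real.exp 1 * c)) := hLge
    _ = 1 * Real.log ((2 * (n:ℝ) - 1) / (Real.exp 1 * c)) := (one_mul _).symm
    _ ≤ c ^ (α / 2 + 1) * Real.log ((2 * (n:ℝ) - 1) / (Real.exp 1 * c)) :=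
        mul_le_mul_of_nonneg_right hcr hLpos.le
  have hKdiv : K / (c ^ (α / 2 + 1) * Real.log ((2 * (n:ℝ) - 1) / (Real.exp 1 * c))) ≤ K / L0 :=
    div_le_div_of_nonneg_left hKpos.le hL0pos hden
  have hrn : (Real.exp 1 * c / (2 * (n:ℝ) - 1)) ^ ((n:ℝ) + α / 2)
      ≤ Real.exp (Real.log (Real.exp 1 * c / (n:ℝ)) * (n:ℝ)) := by
    calc (Real.exp 1 * c / (2 * (n:ℝ) - 1)) ^ ((n:ℝ) + α / 2)
        ≤ (Real.exp 1 * c / (2 * (n:ℝ) - 1)) ^ ((n:ℝ)) :=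
          Real.rpow_le_rpow_of_exponent_ge hrpos hr1.le (by linarith)
    _ ≤ (Real.exp 1 * c / (n:ℝ)) ^ ((n:ℝ)) :=
          Real.rpow_le_rpow hrpos.le
            (div_le_div_of_nonneg_left hecpos.le hnpos (by linarith)) hnpos.le
    _ = Real.exp (Real.log (Real.exp 1 * c / (n:ℝ)) * (n:ℝ)) :=
          Real.rpow_def_of_pos (div_pos hecpos hnpos) _
  have hμtot : ‖μ n‖ ≤ K / L0 * Real.exp (Real.log (Real.exp 1 * c / (n:ℝ)) * (n:ℝ)) := by
    calc ‖μ n‖ ≤ K / (c ^ (α / 2 + 1) * Real.log ((2 * (n:ℝ) - 1) / (Real.exp 1 * c))) *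
          (Real.exp 1 * c / (2 * (n:ℝ) - 1)) ^ ((n:ℝ) + α / 2) := hμ'
    _ ≤ K / L0 * Real.exp (Real.log (Real.exp 1 * c / (n:ℝ)) * (n:ℝ)) :=
        mul_le_mul hKdiv hrn (Real.rpow_nonneg hrpos.le _) (div_pos hKpos hL0pos).le
  -- combine
  have hcomb : |β k n| ≤ Cα * (K / L0) *
      Real.exp (Real.log T * ((n:ℝ) / 1.9) + Real.log (Real.exp 1 * c / (n:ℝ)) * (n:ℝ)) := by
    rw [Real.exp_add]
    calc |β k n| ≤ Cα * (2 * Real.sqrt (χ n) / c) ^ k * ‖μ n‖ := hβ'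
    _ ≤ Cα * Real.exp (Real.log T * ((n:ℝ) / 1.9)) *
        (K / L0 * Real.exp (Real.log (Real.exp 1 * c / (n:ℝ)) * (n:ℝ))) := by
        apply mul_le_mul
        · exact mul_le_mul_of_nonneg_left hpow hCαpos.le
        · exact hμtot
        · exact norm_nonneg _
        · exact mul_nonneg hCαpos.le (Real.exp_pos _).le
    _ = Cα * (K / L0) *
        (Real.exp (Real.log T * ((n:ℝ) / 1.9)) *
          Real.exp (Real.log (Real.exp 1 * c / (n:ℝ)) * (n:ℝ))) := by ring
  -- compute the exponent
  obtain ⟨s, hs⟩ : ∃ s : ℝ, s = Real.log (n:ℝ) - Real.log c := ⟨_, rfl⟩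
  have hlogT : Real.log T = Real.log (2 * D) + s := by
    rw [hT, Real.log_mul (mul_pos two_pos hDpos).ne' (div_pos hnpos hcpos).ne',
      Real.log_div hnpos.ne' hcpos.ne', hs]
  have hlog2 : Real.log (Real.exp 1 * c / (n:ℝ)) = 1 + Real.log c - Real.log (n:ℝ) := by
    rw [Real.log_div hecpos.ne' hnpos.ne', Real.log_mul he1pos.ne' hcpos.ne', Real.log_exp]
  have hPeq : Real.log T * ((n:ℝ) / 1.9) + Real.log (Real.exp 1 * c / (n:ℝ)) * (n:ℝ)
      = (n:ℝ) * (G - (9/19) * s) := by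
    rw [hlogT, hlog2, hG, hs, show (1.9:ℝ) = 19/10 from by norm_num]
    ring
  have hs0 : 0 ≤ s := by
    rw [hs, sub_nonneg]
    exact Real.log_le_log hcpos hcn
  -- the exponent bound
  have hE : (n:ℝ) * (G - (9/19) * s) ≤ N0 * (|G| + 1) + (-1) * (n:ℝ) := by
    have habs0 : 0 ≤ |G| := abs_nonneg G
    rcases le_or_gt (n:ℝ) N0 with hcase | hcase
    · have hGabs : G ≤ |G| := le_abs_self G
      nlinarith only [mul_nonneg hnpos.le hs0,
        mul_le_mul_of_nonneg_left hGabs hnpos.le,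
        mul_le_mul_of_nonneg_right hcase habs0, hcase]
    · have hsge : (19/9) * (G + 1) ≤ s := by
        have hexp : Real.exp ((19/9) * (G + 1)) ≤ (n:ℝ) / c := by
          rw [hN0] at hcase
          rw [le_div_iff₀ hcpos]
          linarith only [hcase]
        calc (19/9) * (G + 1) = Real.log (Real.exp ((19/9) * (G + 1))) :=
              (Real.log_exp _).symm
        _ ≤ Real.log ((n:ℝ) / c) := Real.log_le_log (Real.exp_pos _) hexp
        _ = s := by rw [Real.log_div hnpos.ne' hcpos.ne', hs]
      have h3 : G - (9/19) * s ≤ -1 := by linarith only [hsge]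
      have h4 : (n:ℝ) * (G - (9/19) * s) ≤ (n:ℝ) * (-1) :=
        mul_le_mul_of_nonneg_left h3 hnpos.le
      nlinarith only [h4, mul_nonneg hN0pos.le habs0, hN0pos]
  calc |β k n| ≤ Cα * (K / L0) *
      Real.exp (Real.log T * ((n:ℝ) / 1.9) + Real.log (Real.exp 1 * c / (n:ℝ)) * (n:ℝ)) := hcomb
  _ ≤ Cα * (K / L0) * Real.exp (N0 * (|G| + 1) + (-1) * (n:ℝ)) := by
      apply mul_le_mul_of_nonneg_left _ (mul_nonneg hCαpos.le (div_pos hKpos hL0pos).le)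
      apply Real.exp_le_exp.mpr
      rw [hPeq]; exact hE
  _ = Cα * (K / L0) * Real.exp (N0 * (|G| + 1)) * Real.exp (-1 * (n:ℝ)) := by
      rw [Real.exp_add]; ring
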